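/- Let (X, B, μ, f) be a measurable system satisfying Condition (SC), p ≥ 1, and W a generating wandering set for f. Let H₀ be the set of φ ∈ L^p(X) of the form φ = ∑_{i=1}^m a_i χ_{B_i} where the B_i are pairwise disjoint measurable sets, each B_i ⊆ f^{k_i}(W) for some k_i ∈ ℤ, and ∑_{n∈ℤ} μ(fⁿ(B_i)) < ∞ for each i. Then H₀ is dense in L^p(X). -/

import Mathlib

open MeasureTheory Set Filter
open scoped ENNReal NNReal

/-- The image of a set under the `n`-th power (`n ∈ ℤ`) of a bijection `f`. -/
def zimg {X : Type*} (f : X → X) (n : ℤ) (B : Set X) : Set X :=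
  if 0 ≤ n then f^[n.toNat] '' B else f^[(-n).toNat] ⁻¹' B

/-- `W` is a wandering set for `f`: the sets `fⁿ(W)`, `n ∈ ℤ`, are pairwise disjoint. -/
def Wandering {X : Type*} (f : X → X) (W : Set X) : Prop :=
  Pairwise fun m n : ℤ => Disjoint (zimg f m W) (zimg f n W)

/-- `W` generates `X`: `X = ⋃_{n ∈ ℤ} fⁿ(W)`. -/
def GeneratedBy {X : Type*} (f : X → X) (W : Set X) : Prop :=
  (⋃ n : ℤ, zimg f n W) = Set.univ

/-- The Summability Condition (SC). -/
def SCcond {X : Type*} [MeasurableSpace X] (μ : Measure X) (f : X → X) : Prop :=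
  ∀ ε : ℝ≥0∞, 0 < ε → ∀ B : Set X, MeasurableSet B → μ B < ⊤ →
    ∃ B' : Set X, B' ⊆ B ∧ MeasurableSet B' ∧ μ (B \ B') < ε ∧
      ∑' n : ℤ, μ (zimg f n B') ≠ ⊤

/-- A measurable system: `μ` σ-finite with `μ(X) > 0`, `f` bijective, bimeasurable,
nonsingular, and `μ(f⁻¹(B)) ≤ c·μ(B)` with `0 < c < ∞`. -/
def MeasSystem {X : Type*} [MeasurableSpace X] (μ : Measure X) (f : X → X) (c : ℝ≥0∞) : Prop :=
  SigmaFinite μ ∧ 0 < μ Set.univ ∧ Function.Bijective f ∧ Measurable f ∧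
  (∀ B : Set X, MeasurableSet B → MeasurableSet (f '' B)) ∧
  (∀ B : Set X, MeasurableSet B → (μ (f ⁻¹' B) = 0 ↔ μ B = 0)) ∧
  0 < c ∧ c ≠ ⊤ ∧ (∀ B : Set X, MeasurableSet B → μ (f ⁻¹' B) ≤ c * μ B)

/-- `f` is dissipative: there is a generating wandering set. -/
def Dissipative {X : Type*} [MeasurableSpace X] (f : X → X) : Prop :=
  ∃ W : Set X, MeasurableSet W ∧ Wandering f W ∧ GeneratedBy f W

/-- A set of natural numbers has positive lower density. -/
def PosLowerDensity (A : Set ℕ) : Prop :=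
  0 < Filter.liminf (fun N : ℕ => ((A ∩ Set.Icc 1 N).ncard : ℝ) / N) Filter.atTop

/-- `x` is a recurrent point of `f`. -/
def Recurrent {X : Type*} [TopologicalSpace X] (f : X → X) (x : X) : Prop :=
  ∀ U : Set X, IsOpen U → x ∈ U → ∃ n : ℕ, 1 ≤ n ∧ f^[n] x ∈ U

/-- A continuous linear operator is frequently hypercyclic. -/
def FreqHC {E : Type*} [NormedAddCommGroup E] [NormedSpace ℝ E] (T : E →L[ℝ] E) : Prop :=
  ∃ φ : E, ∀ U : Set E, IsOpen U → U.Nonempty → PosLowerDensity {n : ℕ | (T ^ n) φ ∈ U}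

/-- `d(W) = ‖dμ/dν |_W‖_∞⁻¹`, with the convention `1/∞ = 0`. -/
noncomputable def dSeq {X : Type*} [MeasurableSpace X] (μ ν : Measure X) (W : Set X) : ℝ≥0∞ :=
  (essSup (μ.rnDeriv ν) (μ.restrict W))⁻¹

lemma zimg_mono {X : Type*} (f : X → X) (n : ℤ) {A B : Set X} (h : A ⊆ B) :
    zimg f n A ⊆ zimg f n B := by
  unfold zimg; split_ifs
  · exact Set.image_mono h
  · exact Set.preimage_mono h

lemma image_iterate_measurable {X : Type*} [MeasurableSpace X] {f : X → X}
    (him : ∀ B : Set X, MeasurableSet B → MeasurableSet (f '' B)) (m : ℕ) {B : Set X}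
    (hB : MeasurableSet B) : MeasurableSet (f^[m] '' B) := by
  induction m with
  | zero => simpa using hB
  | succ k ih => rw [Function.iterate_succ', Set.image_comp]; exact him _ ih

lemma zimg_measurable {X : Type*} [MeasurableSpace X] {f : X → X} (hmf : Measurable f)
    (him : ∀ B : Set X, MeasurableSet B → MeasurableSet (f '' B)) (n : ℤ) {B : Set X}
    (hB : MeasurableSet B) : MeasurableSet (zimg f n B) := by
  unfold zimg; split_ifs
  · exact image_iterate_measurable him _ hB
  · exact (hmf.iterate _) hB

lemma indicator_diff_sum {α : Type*} {ι : Type*} [Fintype ι] {C : Set α} {B : ι → Set α}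
    (hsub : ∀ j, B j ⊆ C) (hdisj : Pairwise fun i j => Disjoint (B i) (B j)) (a : ℝ) (x : α) :
    a * C.indicator (fun _ => (1:ℝ)) x - ∑ j, (B j).indicator (fun _ => a) x
      = (C \ ⋃ j, B j).indicator (fun _ => a) x := by
  classical
  by_cases hx : x ∈ ⋃ j, B j
  · obtain ⟨j₀, hj₀⟩ := mem_iUnion.1 hx
    have hxC : x ∈ C := hsub j₀ hj₀
    have hsum : ∑ j, (B j).indicator (fun _ => a) x = a := by
      rw [Finset.sum_eq_single j₀]
      · simp [hj₀]
      · intro j _ hjne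
        have hxj : x ∉ B j := fun hxj => Set.disjoint_left.1 (hdisj hjne) hxj hj₀
        simp [hxj]
      · simp
    have hxE : x ∉ C \ ⋃ j, B j := fun h => h.2 hx
    simp [hsum, hxC, hxE]
  · have hsum : ∑ j, (B j).indicator (fun _ => a) x = 0 := by
      apply Finset.sum_eq_zero; intro j _
      have hxj : x ∉ B j := fun h => hx (mem_iUnion.2 ⟨j, h⟩)
      simp [hxj]
    by_cases hxC : x ∈ C
    · have hxE : x ∈ C \ ⋃ j, B j := ⟨hxC, hx⟩
      simp [hsum, hxC, hxE]
    · have hxE : x ∉ C \ ⋃ j, B j := fun h => hxC h.1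
      simp [hsum, hxC, hxE]

lemma Lp_coeFn_sum {α E : Type*} {m : MeasurableSpace α} {μ : Measure α}
    [NormedAddCommGroup E] {p : ℝ≥0∞} {ι : Type*} (s : Finset ι) (F : ι → Lp E p μ) :
    ⇑(∑ i ∈ s, F i) =ᵐ[μ] fun x => ∑ i ∈ s, F i x := by
  classical
  induction s using Finset.cons_induction with
  | empty =>
      simp only [Finset.sum_empty]
      filter_upwards [Lp.coeFn_zero E p μ] with x hx using hx
  | cons i s his ih =>
      rw [Finset.sum_cons]
      filter_upwards [Lp.coeFn_add (F i) (∑ j ∈ s, F j), ih] with x h1 h2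
      rw [h1]
      simp only [Pi.add_apply]
      rw [h2, Finset.sum_cons]

lemma sc_approx {X : Type*} [MeasurableSpace X] {μ : Measure X} {f : X → X}
    (hmf : Measurable f) (him : ∀ B : Set X, MeasurableSet B → MeasurableSet (f '' B))
    (hSC : SCcond μ f) {W : Set X} (hWm : MeasurableSet W) (hWw : Wandering f W)
    (hWg : GeneratedBy f W) {C : Set X} (hC : MeasurableSet C) (hCfin : μ C < ⊤)
    {δ : ℝ≥0∞} (hδ0 : 0 < δ) (hδtop : δ ≠ ⊤) :
    ∃ (N : ℕ) (Bs : Fin N → Set X) (k : Fin N → ℤ),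
      (∀ j, MeasurableSet (Bs j)) ∧ (∀ j, Bs j ⊆ C) ∧ (∀ j, Bs j ⊆ zimg f (k j) W) ∧
      (Pairwise fun j j' => Disjoint (Bs j) (Bs j')) ∧
      (∀ j, (∑' n : ℤ, μ (zimg f n (Bs j))) ≠ ⊤) ∧
      μ (C \ ⋃ j, Bs j) < δ := by
  classical
  set L : ℤ → Set X := fun n => zimg f n W with hL
  have hLmeas : ∀ n, MeasurableSet (L n) := fun n => zimg_measurable hmf him n hWm
  set P : ℤ → Set X := fun n => C ∩ L n with hP
  have hPmeas : ∀ n, MeasurableSet (P n) := fun n => hC.inter (hLmeas n)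
  have hPdisj : Pairwise (Function.onFun Disjoint P) := fun i j hij =>
    ((hWw hij).mono inter_subset_right inter_subset_right)
  have hPU : ⋃ n, P n = C := by
    rw [hP]
    simp only [← Set.inter_iUnion]
    rw [hWg, Set.inter_univ]
  have hsum_ne : (∑' n, μ (P n)) ≠ ⊤ := by
    rw [← measure_iUnion hPdisj hPmeas, hPU]; exact hCfin.ne
  have htail := ENNReal.tendsto_tsum_compl_atTop_zero hsum_ne
  obtain ⟨K, hK⟩ : ∃ K : Finset ℤ, (∑' n : {n : ℤ // n ∉ K}, μ (P ↑n)) < δ / 2 :=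
    ((tendsto_order.1 htail).2 _ (ENNReal.half_pos hδ0.ne')).exists
  set N := K.card with hN
  set e : Fin N ≃ {x // x ∈ K} := K.equivFin.symm with he
  set εs : ℝ≥0∞ := δ / 2 / 2 / (N + 1) with hεs
  have hδ2ne : δ / 2 ≠ 0 := (ENNReal.half_pos hδ0.ne').ne'
  have hδ22ne : δ / 2 / 2 ≠ 0 := (ENNReal.half_pos hδ2ne).ne'
  have hεs0 : 0 < εs := ENNReal.div_pos hδ22ne (by simp)
  choose B' hB'sub hB'meas hB'small hB'sum using
    fun n : {x // x ∈ K} => hSC εs hεs0 (P ↑n) (hPmeas ↑n)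
      (lt_of_le_of_lt (measure_mono inter_subset_left) hCfin)
  refine ⟨N, fun j => B' (e j), fun j => ((e j : ℤ)), fun j => hB'meas _,
    fun j => (hB'sub (e j)).trans inter_subset_left,
    fun j => (hB'sub (e j)).trans inter_subset_right, ?_, fun j => hB'sum (e j), ?_⟩
  · intro j j' hjj'
    have hne : ((e j : ℤ)) ≠ ((e j' : ℤ)) := fun h => hjj' (e.injective (Subtype.ext h))
    exact (hWw hne).mono ((hB'sub _).trans inter_subset_right)
      ((hB'sub _).trans inter_subset_right)
  · have hcover : C \ (⋃ j, B' (e j)) ⊆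
        (⋃ n : {n : ℤ // n ∉ K}, P ↑n) ∪ ⋃ j : Fin N, (P (e j) \ B' (e j)) := by
      intro x hx
      obtain ⟨hxC, hxB⟩ := hx
      obtain ⟨n, hn⟩ : ∃ n, x ∈ P n := mem_iUnion.1 (hPU ▸ hxC)
      by_cases hnK : n ∈ K
      · right
        refine mem_iUnion.2 ⟨e.symm ⟨n, hnK⟩, ?_, fun hxB' => hxB (mem_iUnion.2 ⟨e.symm ⟨n, hnK⟩, hxB'⟩)⟩
        simpa [Equiv.apply_symm_apply] using hn
      · exact Or.inl (mem_iUnion.2 ⟨⟨n, hnK⟩, hn⟩)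
    have h1 : μ (C \ ⋃ j, B' (e j)) ≤ δ / 2 + (N : ℝ≥0∞) * εs := by
      calc μ (C \ ⋃ j, B' (e j))
          ≤ μ (⋃ n : {n : ℤ // n ∉ K}, P ↑n) + μ (⋃ j : Fin N, (P (e j) \ B' (e j))) :=
            (measure_mono hcover).trans (measure_union_le _ _)
        _ ≤ (∑' n : {n : ℤ // n ∉ K}, μ (P ↑n)) + ∑ j : Fin N, μ (P (e j) \ B' (e j)) := by
            refine add_le_add (measure_iUnion_le _) ?_
            exact (measure_iUnion_le _).trans_eq (tsum_fintype _)
        _ ≤ δ / 2 + (N : ℝ≥0∞) * εs := by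
            refine add_le_add hK.le ?_
            calc (∑ j : Fin N, μ (P (e j) \ B' (e j)))
                ≤ ∑ _j : Fin N, εs := Finset.sum_le_sum fun j _ => (hB'small (e j)).le
              _ = (N : ℝ≥0∞) * εs := by simp [Finset.sum_const, mul_comm]
    have h2 : (N : ℝ≥0∞) * εs ≤ δ / 2 / 2 := by
      calc (N : ℝ≥0∞) * εs ≤ ((N : ℝ≥0∞) + 1) * εs :=
            mul_le_mul_left (self_le_add_right _ _) _
        _ = δ / 2 / 2 := ENNReal.mul_div_cancel (by norm_cast) (by simp)
    have h3 : δ / 2 + δ / 2 / 2 < δ := by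
      have : δ / 2 / 2 < δ / 2 := ENNReal.half_lt_self hδ2ne
        (by simp [ENNReal.div_eq_top, hδtop])
      calc δ / 2 + δ / 2 / 2 < δ / 2 + δ / 2 :=
            ENNReal.add_lt_add_left (by simp [ENNReal.div_eq_top, hδtop]) this
        _ = δ := ENNReal.add_halves δ
    exact lt_of_le_of_lt (h1.trans (add_le_add_right h2 _)) h3

lemma mem_H0 {X : Type*} [MeasurableSpace X] {μ : Measure X} {f : X → X} {p : ℝ≥0∞}
    {W : Set X} {ι : Type*} [Fintype ι] (φ : Lp ℝ p μ) (A : ι → ℝ) (BB : ι → Set X)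
    (kk : ι → ℤ) (h1 : ∀ i, MeasurableSet (BB i))
    (h2 : Pairwise fun i j => Disjoint (BB i) (BB j))
    (h3 : ∀ i, BB i ⊆ zimg f (kk i) W)
    (h4 : ∀ i, (∑' n : ℤ, μ (zimg f n (BB i))) ≠ ⊤)
    (h5 : (φ : X → ℝ) =ᵐ[μ] fun x => ∑ i, A i * (BB i).indicator (fun _ => (1:ℝ)) x) :
    ∃ (m : ℕ) (a : Fin m → ℝ) (Bs : Fin m → Set X) (k : Fin m → ℤ),
      (∀ i, MeasurableSet (Bs i)) ∧
      (Pairwise fun i j => Disjoint (Bs i) (Bs j)) ∧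
      (∀ i, Bs i ⊆ zimg f (k i) W) ∧
      (∀ i, (∑' n : ℤ, μ (zimg f n (Bs i))) ≠ ⊤) ∧
      (φ : X → ℝ) =ᵐ[μ] fun x => ∑ i, a i * (Bs i).indicator (fun _ => (1 : ℝ)) x := by
  classical
  let e : Fin (Fintype.card ι) ≃ ι := (Fintype.equivFin ι).symm
  refine ⟨Fintype.card ι, fun i => A (e i), fun i => BB (e i), fun i => kk (e i),
    fun i => h1 _, ?_, fun i => h3 _, fun i => h4 _, ?_⟩
  · intro i j hij
    exact h2 fun h => hij (e.injective h)
  · refine h5.trans (Filter.Eventually.of_forall fun x => ?_)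
    exact (Equiv.sum_comp e fun i => A i * (BB i).indicator (fun _ => (1:ℝ)) x).symm

/-- In a measurable system satisfying Condition (SC) with generating
wandering set `W`, the set `H₀` of `L^p` functions of the form `∑ aᵢ χ_{Bᵢ}` with the
`Bᵢ` pairwise disjoint, each contained in some level `f^{kᵢ}(W)` and with
`∑_{n∈ℤ} μ(fⁿ(Bᵢ)) < ∞`, is dense in `L^p(X)`. -/
theorem stmt_15 {X : Type*} [MeasurableSpace X] (μ : Measure X) (f : X → X) (c : ℝ≥0∞)
    (hsys : MeasSystem μ f c) (hSC : SCcond μ f)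
    (p : ℝ≥0∞) [Fact (1 ≤ p)] (hp : p ≠ ⊤)
    (W : Set X) (hWm : MeasurableSet W) (hWw : Wandering f W) (hWg : GeneratedBy f W) :
    Dense {φ : Lp ℝ p μ | ∃ (m : ℕ) (a : Fin m → ℝ) (Bs : Fin m → Set X) (k : Fin m → ℤ),
      (∀ i, MeasurableSet (Bs i)) ∧
      (Pairwise fun i j => Disjoint (Bs i) (Bs j)) ∧
      (∀ i, Bs i ⊆ zimg f (k i) W) ∧
      (∀ i, (∑' n : ℤ, μ (zimg f n (Bs i))) ≠ ⊤) ∧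
      (φ : X → ℝ) =ᵐ[μ] fun x => ∑ i, a i * (Bs i).indicator (fun _ => (1 : ℝ)) x} := by
  classical
  obtain ⟨hσ, hμpos, hbij, hmf, him, hns, hc0, hctop, hcle⟩ := hsys
  have hp1 : (1:ℝ≥0∞) ≤ p := Fact.out
  have hp0 : p ≠ 0 := fun h => by simp [h] at hp1
  have hpr_pos : 0 < p.toReal := ENNReal.toReal_pos hp0 hp
  intro φ
  rw [EMetric.mem_closure_iff]
  intro ε hε
  set ε' : ℝ≥0∞ := min ε 1 with hε'def
  have hε'0 : 0 < ε' := lt_min hε zero_lt_one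
  have hε'top : ε' ≠ ⊤ := ((min_le_right ε 1).trans_lt ENNReal.one_lt_top).ne
  have hε'le : ε' ≤ ε := min_le_left _ _
  have hhalf0 : (0:ℝ≥0∞) < ε' / 2 := ENNReal.half_pos hε'0.ne'
  have hhalftop : ε' / 2 ≠ ⊤ := by simp [ENNReal.div_eq_top, hε'top]
  obtain ⟨ψ₀, hψ₀⟩ : ∃ ψ₀ : Lp.simpleFunc ℝ p μ, edist φ (ψ₀ : Lp ℝ p μ) < ε' / 2 := by
    have hmem := Lp.simpleFunc.denseRange (E := ℝ) (μ := μ) hp φ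
    rw [EMetric.mem_closure_iff] at hmem
    obtain ⟨y, hy, hlt⟩ := hmem _ hhalf0
    obtain ⟨ψ₀, rfl⟩ := hy
    exact ⟨ψ₀, hlt⟩
  set g : SimpleFunc X ℝ := Lp.simpleFunc.toSimpleFunc ψ₀ with hgdef
  have hg_ae : ⇑g =ᵐ[μ] ⇑(ψ₀ : Lp ℝ p μ) := Lp.simpleFunc.toSimpleFunc_eq_toFun ψ₀
  have hgmem : MemLp g p μ := Lp.simpleFunc.memLp ψ₀
  set R : Finset ℝ := g.range.filter (fun y => y ≠ 0) with hRdef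
  set m : ℕ := R.card with hmdef
  set e : Fin m ≃ {y // y ∈ R} := R.equivFin.symm with hedef
  set a : Fin m → ℝ := fun i => (e i : ℝ) with hadef
  set C : Fin m → Set X := fun i => g ⁻¹' {(e i : ℝ)} with hCdef
  have hCmeas : ∀ i, MeasurableSet (C i) := fun i => g.measurableSet_fiber _
  have ha_ne : ∀ i, a i ≠ 0 := fun i => (Finset.mem_filter.1 (e i).2).2
  have hCfin : ∀ i, μ (C i) < ⊤ := fun i =>
    SimpleFunc.measure_preimage_lt_top_of_memLp hp0 hp g hgmem _ (ha_ne i)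
  have hCdisj : Pairwise fun i j => Disjoint (C i) (C j) := by
    intro i j hij
    rw [Set.disjoint_left]
    intro x hxi hxj
    exact hij (e.injective (Subtype.ext
      ((Set.mem_singleton_iff.1 hxi).symm.trans (Set.mem_singleton_iff.1 hxj))))
  have hgsum : ∀ x, g x = ∑ i, a i * (C i).indicator (fun _ => (1:ℝ)) x := by
    intro x
    by_cases hgx : g x = 0
    · rw [hgx]
      symm
      apply Finset.sum_eq_zero
      intro i _
      have hxC : x ∉ C i := fun hx => ha_ne i ((Set.mem_singleton_iff.1 hx).symm.trans hgx)
      simp [Set.indicator_of_notMem hxC]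
    · have hmem : g x ∈ R := by
        rw [hRdef, Finset.mem_filter]
        exact ⟨g.mem_range_self x, hgx⟩
      have hei₀ : (e (e.symm ⟨g x, hmem⟩) : ℝ) = g x := by rw [Equiv.apply_symm_apply]
      symm
      rw [Finset.sum_eq_single (e.symm ⟨g x, hmem⟩)]
      · have hxC : x ∈ C (e.symm ⟨g x, hmem⟩) := by
          simp only [hCdef, Set.mem_preimage, Set.mem_singleton_iff, hei₀]
        rw [Set.indicator_of_mem hxC, mul_one]
        exact hei₀
      · intro j _ hj
        have hxC : x ∉ C j := by
          intro hx
          exact hj (e.injective (Subtype.ext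
            ((Set.mem_singleton_iff.1 hx).symm.trans hei₀.symm)))
        simp [Set.indicator_of_notMem hxC]
      · simp
  -- error budgets
  set η : ℝ≥0∞ := ε' / 2 / ((m : ℝ≥0∞) + 1) with hηdef
  have hη0 : 0 < η := ENNReal.div_pos hhalf0.ne' (by simp)
  have hηtop : η ≠ ⊤ := by
    rw [hηdef, Ne, ENNReal.div_eq_top]
    push_neg
    exact ⟨fun _ => by norm_cast, fun h => absurd h hhalftop⟩
  set base : Fin m → ℝ≥0∞ := fun i => η / ((‖a i‖₊ : ℝ≥0∞) + 1) with hbasedef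
  have hbase0 : ∀ i, 0 < base i := fun i => ENNReal.div_pos hη0.ne' (by simp)
  have hbasetop : ∀ i, base i ≠ ⊤ := by
    intro i
    rw [hbasedef, Ne, ENNReal.div_eq_top]
    push_neg
    exact ⟨fun _ => by simp, fun h => absurd h hηtop⟩
  set δ : Fin m → ℝ≥0∞ := fun i => (base i) ^ p.toReal with hδdef
  have hδ0 : ∀ i, 0 < δ i := fun i => ENNReal.rpow_pos (hbase0 i) (hbasetop i)
  have hδtop : ∀ i, δ i ≠ ⊤ := fun i =>
    (ENNReal.rpow_lt_top_of_nonneg hpr_pos.le (hbasetop i)).ne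
  choose N Bs k hBm hBsubC hBsubW hBdisj hBsum hBsmall using fun i : Fin m =>
    sc_approx hmf him hSC hWm hWw hWg (hCmeas i) (hCfin i) (hδ0 i) (hδtop i)
  -- the approximating element
  have hBBfin : ∀ q : (Σ i : Fin m, Fin (N i)), μ (Bs q.1 q.2) ≠ ⊤ :=
    fun q => ((measure_mono (hBsubC q.1 q.2)).trans_lt (hCfin q.1)).ne
  set ψq : (Σ i : Fin m, Fin (N i)) → Lp ℝ p μ :=
    fun q => indicatorConstLp p (hBm q.1 q.2) (hBBfin q) (a q.1) with hψqdef
  set ψ : Lp ℝ p μ := ∑ q : (Σ i : Fin m, Fin (N i)), ψq q with hψdef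
  have hψcoe : ⇑ψ =ᵐ[μ] fun x => ∑ q : (Σ i : Fin m, Fin (N i)),
      (Bs q.1 q.2).indicator (fun _ => a q.1) x := by
    have h2 : ∀ᵐ x ∂μ, ∀ q : (Σ i : Fin m, Fin (N i)),
        (ψq q : X → ℝ) x = (Bs q.1 q.2).indicator (fun _ => a q.1) x :=
      ae_all_iff.2 fun q => indicatorConstLp_coeFn
    filter_upwards [Lp_coeFn_sum (Finset.univ : Finset (Σ i : Fin m, Fin (N i))) ψq, h2]
      with x hx1 hx2
    rw [hψdef, hx1]
    exact Finset.sum_congr rfl fun q _ => hx2 q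
  refine ⟨ψ, ?_, ?_⟩
  · -- membership in H₀
    refine mem_H0 (f := f) (W := W) (ι := (Σ i : Fin m, Fin (N i))) ψ (fun q => a q.1) (fun q => Bs q.1 q.2)
      (fun q => k q.1 q.2) (fun q => hBm q.1 q.2) ?_ (fun q => hBsubW q.1 q.2)
      (fun q => hBsum q.1 q.2) ?_
    · intro q q' hqq'
      by_cases hii : q.1 = q'.1
      · obtain ⟨i, j⟩ := q
        obtain ⟨i', j'⟩ := q'
        cases hii
        have hjj : j ≠ j' := fun h => hqq' (by cases h; rfl)
        exact hBdisj i hjj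
      · exact (hCdisj hii).mono (hBsubC q.1 q.2) (hBsubC q'.1 q'.2)
    · refine hψcoe.trans (Filter.Eventually.of_forall fun x => ?_)
      refine Finset.sum_congr rfl fun q _ => ?_
      by_cases hx : x ∈ Bs q.1 q.2 <;> simp [hx]
  · -- distance estimate
    set E : Fin m → Set X := fun i => C i \ ⋃ j, Bs i j with hEdef
    have hEmeas : ∀ i, MeasurableSet (E i) :=
      fun i => (hCmeas i).diff (MeasurableSet.iUnion fun j => hBm i j)
    have hμE : ∀ i, μ (E i) < δ i := fun i => hBsmall i
    have hdiff_fun : ∀ x, g x - (∑ q : (Σ i : Fin m, Fin (N i)),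
        (Bs q.1 q.2).indicator (fun _ => a q.1) x) =
        ∑ i, (E i).indicator (fun _ => a i) x := by
      intro x
      rw [hgsum x, ← Finset.univ_sigma_univ, Finset.sum_sigma, ← Finset.sum_sub_distrib]
      exact Finset.sum_congr rfl fun i _ => indicator_diff_sum (hBsubC i) (hBdisj i) (a i) x
    have hdiff : (⇑(ψ₀ : Lp ℝ p μ) - ⇑ψ) =ᵐ[μ]
        fun x => ∑ i, (E i).indicator (fun _ => a i) x := by
      filter_upwards [hg_ae, hψcoe] with x h1 h2
      rw [Pi.sub_apply, ← h1, h2]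
      exact hdiff_fun x
    have hnorm : eLpNorm (⇑(ψ₀ : Lp ℝ p μ) - ⇑ψ) p μ ≤ ε' / 2 := by
      rw [eLpNorm_congr_ae hdiff]
      have hfun : (fun x => ∑ i : Fin m, (E i).indicator (fun _ => a i) x)
          = ∑ i : Fin m, fun x => (E i).indicator (fun _ => a i) x := by
        funext x; simp
      rw [hfun]
      refine le_trans (eLpNorm_sum_le
        (fun i _ => (measurable_const.indicator (hEmeas i)).aestronglyMeasurable) hp1) ?_
      have hterm : ∀ i, eLpNorm ((E i).indicator (fun _ => a i)) p μ ≤ η := by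
        intro i
        rw [eLpNorm_indicator_const (hEmeas i) hp0 hp]
        calc (‖a i‖₊ : ℝ≥0∞) * μ (E i) ^ (1 / p.toReal)
            ≤ (‖a i‖₊ : ℝ≥0∞) * (δ i) ^ (1 / p.toReal) := by
              gcongr
              exact (hμE i).le
          _ = (‖a i‖₊ : ℝ≥0∞) * (η / ((‖a i‖₊ : ℝ≥0∞) + 1)) := by
              rw [hδdef]
              rw [← ENNReal.rpow_mul, mul_one_div, div_self hpr_pos.ne', ENNReal.rpow_one]
          _ ≤ ((‖a i‖₊ : ℝ≥0∞) + 1) * (η / ((‖a i‖₊ : ℝ≥0∞) + 1)) :=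
              mul_le_mul_left (self_le_add_right _ _) _
          _ = η := ENNReal.mul_div_cancel (by intro h; simp at h) (by simp)
      calc (∑ i : Fin m, eLpNorm ((E i).indicator (fun _ => a i)) p μ)
          ≤ ∑ _i : Fin m, η := Finset.sum_le_sum fun i _ => hterm i
        _ = (m : ℝ≥0∞) * η := by simp [mul_comm]
        _ ≤ ((m : ℝ≥0∞) + 1) * η := mul_le_mul_left (self_le_add_right _ _) _
        _ = ε' / 2 := ENNReal.mul_div_cancel (by norm_cast) (by simp)
    have hed : edist (ψ₀ : Lp ℝ p μ) ψ ≤ ε' / 2 := by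
      rw [Lp.edist_def]
      exact hnorm
    calc edist φ ψ ≤ edist φ (ψ₀ : Lp ℝ p μ) + edist (ψ₀ : Lp ℝ p μ) ψ := edist_triangle _ _ _
      _ ≤ edist φ (ψ₀ : Lp ℝ p μ) + ε' / 2 := add_le_add_right hed _
      _ < ε' / 2 + ε' / 2 := ENNReal.add_lt_add_right hhalftop hψ₀
      _ = ε' := ENNReal.add_halves _
      _ ≤ ε := hε'le
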